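/- Let G and H be simple graphs, each with at least two vertices. Then the modular product G⋄H contains no pair of distinct false twins; that is, there do not exist distinct vertices (g,h) and (g',h') of G⋄H whose open neighborhoods in G⋄H are equal. -/

import Mathlib

open SimpleGraph

/-- The closed neighborhood `N[v]` of a vertex. -/
def closedNbr {α : Type*} (G : SimpleGraph α) (v : α) : Set α :=
  insert v (G.neighborSet v)

/-- The modular product `G ⋄ H`. -/
def modularProduct {α β : Type*} (G : SimpleGraph α) (H : SimpleGraph β) :
    SimpleGraph (α × β) :=
  SimpleGraph.fromRel (fun x y =>
    (x.1 = y.1 ∧ H.Adj x.2 y.2) ∨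
    (G.Adj x.1 y.1 ∧ x.2 = y.2) ∨
    (G.Adj x.1 y.1 ∧ H.Adj x.2 y.2) ∨
    (x.1 ≠ y.1 ∧ x.2 ≠ y.2 ∧ ¬ G.Adj x.1 y.1 ∧ ¬ H.Adj x.2 y.2))

/-- `{g, g'}` is a `γ_G`-pair: the closed neighborhoods are disjoint and cover `V(G)`. -/
def gammaPair {α : Type*} (G : SimpleGraph α) (g g' : α) : Prop :=
  closedNbr G g ∩ closedNbr G g' = ∅ ∧ closedNbr G g ∪ closedNbr G g' = Set.univ

/-- A universal vertex. -/
def IsUniversal {α : Type*} (G : SimpleGraph α) (v : α) : Prop :=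
  closedNbr G v = Set.univ

/-- A complete graph: every two distinct vertices are adjacent. -/
def IsCompleteGraph {α : Type*} (G : SimpleGraph α) : Prop :=
  ∀ u v : α, u ≠ v → G.Adj u v

/-- `G` is a disjoint union of two cliques. -/
def TwoCliques {α : Type*} (G : SimpleGraph α) : Prop :=
  ∃ A B : Set α, A.Nonempty ∧ B.Nonempty ∧ A ∪ B = Set.univ ∧ A ∩ B = ∅ ∧
    (∀ u ∈ A, ∀ v ∈ A, u ≠ v → G.Adj u v) ∧
    (∀ u ∈ B, ∀ v ∈ B, u ≠ v → G.Adj u v) ∧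
    (∀ u ∈ A, ∀ v ∈ B, ¬ G.Adj u v)

/-- `u` and `v` are mutually maximally distant in `X`. -/
def MMD {α : Type*} (X : SimpleGraph α) (u v : α) : Prop :=
  (∀ w, X.Adj u w → X.edist w v ≤ X.edist u v) ∧
  (∀ w, X.Adj v w → X.edist w u ≤ X.edist u v)

/-- A strong resolving set of `X`. -/
def IsStrongResolvingSet {α : Type*} (X : SimpleGraph α) (S : Set α) : Prop :=
  ∀ u v : α, u ≠ v → ∃ w ∈ S,
    X.dist u w = X.dist u v + X.dist v w ∨ X.dist v w = X.dist v u + X.dist u w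

/-- The strong metric dimension of `X`. -/
noncomputable def sdim {α : Type*} (X : SimpleGraph α) : ℕ :=
  sInf {n | ∃ S : Set α, S.ncard = n ∧ IsStrongResolvingSet X S}

/-- The star `K_{1,n}`: the center is `none`, the leaves are `some i`. -/
def starGraph (n : ℕ) : SimpleGraph (Option (Fin n)) :=
  SimpleGraph.fromRel (fun u v => u = none ∧ v ≠ none)

/-- The vertex cover number `β(X)`. -/
noncomputable def vertexCoverNumber {γ : Type*} (X : SimpleGraph γ) : ℕ :=
  sInf {n | ∃ C : Set γ, C.ncard = n ∧ ∀ u v, X.Adj u v → u ∈ C ∨ v ∈ C}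


lemma mp_adj {α β : Type*} (G : SimpleGraph α) (H : SimpleGraph β) (x y : α × β) :
    (modularProduct G H).Adj x y ↔ x ≠ y ∧
      ((x.1 = y.1 ∧ H.Adj x.2 y.2) ∨
       (G.Adj x.1 y.1 ∧ x.2 = y.2) ∨
       (G.Adj x.1 y.1 ∧ H.Adj x.2 y.2) ∨
       (x.1 ≠ y.1 ∧ x.2 ≠ y.2 ∧ ¬ G.Adj x.1 y.1 ∧ ¬ H.Adj x.2 y.2)) := by
  rw [modularProduct, SimpleGraph.fromRel_adj]
  constructor
  · rintro ⟨hne, h | h⟩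
    · exact ⟨hne, h⟩
    · refine ⟨hne, ?_⟩
      rw [G.adj_comm, H.adj_comm]
      rcases h with h | h | h | h
      · exact Or.inl ⟨h.1.symm, h.2⟩
      · exact Or.inr (Or.inl ⟨h.1, h.2.symm⟩)
      · exact Or.inr (Or.inr (Or.inl h))
      · exact Or.inr (Or.inr (Or.inr ⟨fun e => h.1 e.symm, fun e => h.2.1 e.symm, h.2.2.1, h.2.2.2⟩))
  · rintro ⟨hne, h⟩
    exact ⟨hne, Or.inl h⟩

/-- no distinct false twins in the modular product of two graphs
with at least two vertices each. -/
theorem no_false_twins_modularProduct {α β : Type*} [Nontrivial α] [Nontrivial β]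
    (G : SimpleGraph α) (H : SimpleGraph β) :
    ¬ ∃ x y : α × β, x ≠ y ∧
      (modularProduct G H).neighborSet x = (modularProduct G H).neighborSet y := by
  rintro ⟨⟨g, h⟩, ⟨g', h'⟩, hne, hN⟩
  have key : ∀ z, (modularProduct G H).Adj (g, h) z ↔ (modularProduct G H).Adj (g', h') z := by
    intro z
    rw [← SimpleGraph.mem_neighborSet, ← SimpleGraph.mem_neighborSet, hN]
  have hxy : ¬ (modularProduct G H).Adj (g, h) (g', h') := by
    intro hadj
    exact ((key (g', h')).mp hadj).ne rfl
  rw [mp_adj] at hxy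
  simp only [Prod.mk.injEq, ne_eq, Prod.ext_iff] at hxy
  by_cases hg : g = g'
  · subst hg
    have hh : h ≠ h' := by
      intro e; exact hne (by rw [e])
    have hH : ¬ H.Adj h h' := by tauto
    have hH' : ¬ H.Adj h' h := fun e => hH (H.adj_symm e)
    obtain ⟨g'', hg''⟩ := exists_ne g
    have t := key (g'', h)
    rw [mp_adj, mp_adj] at t
    simp [Prod.ext_iff, Ne.symm hg'', Ne.symm hh, hH, hH', H.irrefl] at t
  · by_cases hh : h = h'
    · subst hh
      have hG : ¬ G.Adj g g' := by tauto
      have hG' : ¬ G.Adj g' g := fun e => hG (G.adj_symm e)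
      obtain ⟨h'', hh''⟩ := exists_ne h
      have t := key (g, h'')
      rw [mp_adj, mp_adj] at t
      simp [Prod.ext_iff, Ne.symm hh'', Ne.symm hg, hG, hG', G.irrefl] at t
    · by_cases hG : G.Adj g g'
      · have hH : ¬ H.Adj h h' := by tauto
        have hH' : ¬ H.Adj h' h := fun e => hH (H.adj_symm e)
        have t := key (g', h)
        rw [mp_adj, mp_adj] at t
        simp [Prod.ext_iff, hg, Ne.symm hg, Ne.symm hh, hG, G.adj_symm hG, hH, hH',
          G.irrefl, H.irrefl] at t
      · by_cases hH : H.Adj h h'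
        · have hG' : ¬ G.Adj g' g := fun e => hG (G.adj_symm e)
          have t := key (g, h')
          rw [mp_adj, mp_adj] at t
          simp [Prod.ext_iff, hg, hh, Ne.symm hg, Ne.symm hh, hH, H.adj_symm hH, hG, hG',
            G.irrefl, H.irrefl] at t
        · exact hxy ⟨fun e => hg e.1, Or.inr (Or.inr (Or.inr ⟨hg, hh, hG, hH⟩))⟩
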